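/- Let G = Q₈ = ⟨x,y | x⁴ = 1, x² = y², xʸ = x⁻¹⟩. The 2-Cayley digraph Γ = Cay(G,(T_{i,j})_{2×2}) with T_{1,2} = {1, x, y}, T_{2,1} = {xy, x²}, T_{1,1} = T_{2,2} = ∅, is an oriented graph (T_{1,2} ∩ T_{2,1}⁻¹ = ∅) and satisfies Aut(Γ) ≅ Q₈, acting semiregularly with two orbits giving a bipartition; i.e., Γ is a 2-POSR of Q₈. -/
import Mathlib

/-- Arc relation of the 2-Cayley digraph with `T₁₂ = S`, `T₂₁ = T`,
`T₁₁ = T₂₂ = ∅`, on vertex set `G × Fin 2`. -/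
def cay2Arc {G : Type*} [Group G] (S T : Set G) (u v : G × Fin 2) : Prop :=
  (u.2 = 0 ∧ v.2 = 1 ∧ ∃ s ∈ S, v.1 = s * u.1) ∨
    (u.2 = 1 ∧ v.2 = 0 ∧ ∃ t ∈ T, v.1 = t * u.1)

/-- The automorphism group of the digraph with arc relation `Arc`. -/
def autSubgroup {V : Type*} (Arc : V → V → Prop) : Subgroup (Equiv.Perm V) where
  carrier := {σ | ∀ u v, Arc u v ↔ Arc (σ u) (σ v)}
  one_mem' := fun _ _ => Iff.rfl
  mul_mem' := by
    intro σ τ hσ hτ u v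
    simpa using (hτ u v).trans (hσ (τ u) (τ v))
  inv_mem' := by
    intro σ hσ u v
    simpa using (hσ (σ⁻¹ u) (σ⁻¹ v)).symm

namespace Stmt13Aux

abbrev G8 := QuaternionGroup 2
abbrev xx : G8 := QuaternionGroup.a 1
abbrev yy : G8 := QuaternionGroup.xa 0
abbrev V8 := G8 × Fin 2

def SS : Set G8 := {1, xx, yy}
def TT : Set G8 := {xx * yy, xx ^ 2}

def ArcD (u v : V8) : Prop :=
  (u.2 = 0 ∧ v.2 = 1 ∧ (v.1 = u.1 ∨ v.1 = xx * u.1 ∨ v.1 = yy * u.1)) ∨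
  (u.2 = 1 ∧ v.2 = 0 ∧ (v.1 = xx * yy * u.1 ∨ v.1 = xx ^ 2 * u.1))

instance : ∀ u v, Decidable (ArcD u v) := fun u v => by unfold ArcD; infer_instance

lemma arc_iff (u v : V8) : cay2Arc SS TT u v ↔ ArcD u v := by
  simp only [cay2Arc, ArcD, SS, TT, Set.mem_insert_iff, Set.mem_singleton_iff]
  constructor
  · rintro (⟨h1, h2, s, (rfl | rfl | rfl), he⟩ | ⟨h1, h2, s, (rfl | rfl), he⟩)
    exacts [Or.inl ⟨h1, h2, Or.inl (by rw [he, one_mul])⟩,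
      Or.inl ⟨h1, h2, Or.inr (Or.inl he)⟩,
      Or.inl ⟨h1, h2, Or.inr (Or.inr he)⟩,
      Or.inr ⟨h1, h2, Or.inl he⟩,
      Or.inr ⟨h1, h2, Or.inr he⟩]
  · rintro (⟨h1, h2, (h | h | h)⟩ | ⟨h1, h2, (h | h)⟩)
    · exact Or.inl ⟨h1, h2, 1, Or.inl rfl, by simpa using h⟩
    · exact Or.inl ⟨h1, h2, xx, Or.inr (Or.inl rfl), h⟩
    · exact Or.inl ⟨h1, h2, yy, Or.inr (Or.inr rfl), h⟩
    · exact Or.inr ⟨h1, h2, xx * yy, Or.inl rfl, h⟩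
    · exact Or.inr ⟨h1, h2, xx ^ 2, Or.inr rfl, h⟩

lemma arc01 (a b : G8) : ArcD (a, 0) (b, 1) ↔ (b = a ∨ b = xx * a ∨ b = yy * a) := by
  simp [ArcD]

lemma arc10 (a b : G8) : ArcD (a, 1) (b, 0) ↔ (b = xx * yy * a ∨ b = xx ^ 2 * a) := by
  simp [ArcD]

/-- out-degree ≥ 3 characterizes part 0 -/
def PD (v : V8) : Prop :=
  ∃ a, ArcD v a ∧ ∃ b, ArcD v b ∧ a ≠ b ∧ ∃ c, ArcD v c ∧ a ≠ c ∧ b ≠ c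

instance : DecidablePred PD := fun v => by unfold PD; infer_instance

lemma pd_iff : ∀ v : V8, PD v ↔ v.2 = 0 := by decide

def QZ (u v : V8) : Prop :=
  ∃ m, ArcD u m ∧ ArcD m v ∧ ∃ m', ArcD u m' ∧ ArcD m' v ∧ m ≠ m'

instance : ∀ u v, Decidable (QZ u v) := fun u v => by unfold QZ; infer_instance

lemma qz_iff : ∀ u v : V8, QZ u v ↔
    ((u.2 = 0 ∧ v.2 = 0 ∧ v.1 = xx ^ 3 * u.1) ∨
     (u.2 = 1 ∧ v.2 = 1 ∧ v.1 = xx ^ 2 * yy * u.1)) := by decide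

variable (σ : Equiv.Perm V8)

lemma pd_inv (hσ : ∀ u v, ArcD u v ↔ ArcD (σ u) (σ v)) (v : V8) (h : PD v) : PD (σ v) := by
  obtain ⟨a, h1, b, h2, hab, c, h3, hac, hbc⟩ := h
  exact ⟨σ a, (hσ v a).1 h1, σ b, (hσ v b).1 h2, fun h => hab (σ.injective h),
    σ c, (hσ v c).1 h3, fun h => hac (σ.injective h), fun h => hbc (σ.injective h)⟩

lemma pd_inv' (hσ : ∀ u v, ArcD u v ↔ ArcD (σ u) (σ v)) (v : V8) (h : PD (σ v)) : PD v := by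
  obtain ⟨a, h1, b, h2, hab, c, h3, hac, hbc⟩ := h
  refine ⟨σ.symm a, (hσ v (σ.symm a)).2 (by rwa [Equiv.apply_symm_apply]),
    σ.symm b, (hσ v (σ.symm b)).2 (by rwa [Equiv.apply_symm_apply]),
    σ.symm.injective.ne hab,
    σ.symm c, (hσ v (σ.symm c)).2 (by rwa [Equiv.apply_symm_apply]),
    σ.symm.injective.ne hac, σ.symm.injective.ne hbc⟩

lemma parts (hσ : ∀ u v, ArcD u v ↔ ArcD (σ u) (σ v)) : ∀ v : V8, (σ v).2 = v.2 := by
  intro v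
  have h1 : PD v ↔ PD (σ v) := ⟨pd_inv σ hσ v, pd_inv' σ hσ v⟩
  have h2 := pd_iff v
  have h3 := pd_iff (σ v)
  have : (v.2 = 0 ↔ (σ v).2 = 0) := (h2.symm.trans h1).trans h3
  revert this
  have : ∀ i j : Fin 2, ((i = 0 ↔ j = 0) → j = i) := by decide
  exact this v.2 (σ v).2

lemma qz_inv (hσ : ∀ u v, ArcD u v ↔ ArcD (σ u) (σ v)) (u v : V8) (h : QZ u v) : QZ (σ u) (σ v) := by
  obtain ⟨m, h1, h2, m', h3, h4, hne⟩ := h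
  exact ⟨σ m, (hσ u m).1 h1, (hσ m v).1 h2, σ m', (hσ u m').1 h3, (hσ m' v).1 h4,
    fun h => hne (σ.injective h)⟩

lemma stab (hσ : ∀ u v, ArcD u v ↔ ArcD (σ u) (σ v)) (h0 : σ (1, 0) = (1, 0)) : σ = 1 := by
  have hp := parts σ hσ
  set A : G8 → G8 := fun g => (σ (g, 0)).1 with hAdef
  set B : G8 → G8 := fun g => (σ (g, 1)).1 with hBdef
  have hA : ∀ g, σ (g, 0) = (A g, 0) := fun g => Prod.ext rfl (hp (g, 0))
  have hB : ∀ g, σ (g, 1) = (B g, 1) := fun g => Prod.ext rfl (hp (g, 1))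
  have hA1 : A 1 = 1 := by show (σ (1, 0)).1 = 1; rw [h0]
  -- the two-path shift rules
  have shift0 : ∀ g, A (xx ^ 3 * g) = xx ^ 3 * A g := by
    intro g
    have h1 : QZ (g, 0) (xx ^ 3 * g, 0) := (qz_iff _ _).mpr (Or.inl ⟨rfl, rfl, rfl⟩)
    have h2 := qz_inv σ hσ _ _ h1
    rw [hA, hA] at h2
    rcases (qz_iff _ _).mp h2 with ⟨_, _, h⟩ | ⟨h, _⟩
    · exact h
    · simp at h
  have shift1 : ∀ g, B (xx ^ 2 * yy * g) = xx ^ 2 * yy * B g := by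
    intro g
    have h1 : QZ (g, 1) (xx ^ 2 * yy * g, 1) := (qz_iff _ _).mpr (Or.inr ⟨rfl, rfl, rfl⟩)
    have h2 := qz_inv σ hσ _ _ h1
    rw [hB, hB] at h2
    rcases (qz_iff _ _).mp h2 with ⟨h, _⟩ | ⟨_, _, h⟩
    · simp at h
    · exact h
  have ruleS : ∀ g h : G8, (h = g ∨ h = xx * g ∨ h = yy * g) ↔
      (B h = A g ∨ B h = xx * A g ∨ B h = yy * A g) := by
    intro g h
    have := hσ (g, 0) (h, 1)
    rw [hA, hB, arc01, arc01] at this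
    exact this
  have ruleT : ∀ g h : G8, (h = xx * yy * g ∨ h = xx ^ 2 * g) ↔
      (A h = xx * yy * B g ∨ A h = xx ^ 2 * B g) := by
    intro g h
    have := hσ (g, 1) (h, 0)
    rw [hA, hB, arc10, arc10] at this
    exact this
  -- A on ⟨x⟩
  have hAx3 : A (xx ^ 3) = xx ^ 3 := by
    have := shift0 1; rwa [mul_one, hA1, mul_one] at this
  have hAx2 : A (xx ^ 2) = xx ^ 2 := by
    have := shift0 (xx ^ 3); rwa [hAx3, (by decide : xx ^ 3 * xx ^ 3 = xx ^ 2)] at this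
  have hAx : A xx = xx := by
    have := shift0 (xx ^ 2); rwa [hAx2, (by decide : xx ^ 3 * xx ^ 2 = xx)] at this
  -- B values
  have hB1 : B 1 = 1 := by
    have h1 := (ruleS 1 1).mp (Or.inl rfl)
    have h2 := (ruleS (xx ^ 3) 1).mp (by decide)
    rw [hA1] at h1; rw [hAx3] at h2
    exact (by decide : ∀ z : G8, (z = 1 ∨ z = xx * 1 ∨ z = yy * 1) →
      (z = xx ^ 3 ∨ z = xx * xx ^ 3 ∨ z = yy * xx ^ 3) → z = 1) _ h1 h2
  have hBx : B xx = xx := by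
    have h1 := (ruleS 1 xx).mp (by decide)
    have h2 := (ruleS xx xx).mp (Or.inl rfl)
    rw [hA1] at h1; rw [hAx] at h2
    exact (by decide : ∀ z : G8, (z = 1 ∨ z = xx * 1 ∨ z = yy * 1) →
      (z = xx ∨ z = xx * xx ∨ z = yy * xx) → z = xx) _ h1 h2
  have hBx2 : B (xx ^ 2) = xx ^ 2 := by
    have h1 := (ruleS xx (xx ^ 2)).mp (by decide)
    have h2 := (ruleS (xx ^ 2) (xx ^ 2)).mp (Or.inl rfl)
    rw [hAx] at h1; rw [hAx2] at h2
    exact (by decide : ∀ z : G8, (z = xx ∨ z = xx * xx ∨ z = yy * xx) →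
      (z = xx ^ 2 ∨ z = xx * xx ^ 2 ∨ z = yy * xx ^ 2) → z = xx ^ 2) _ h1 h2
  have hBx3 : B (xx ^ 3) = xx ^ 3 := by
    have h1 := (ruleS (xx ^ 2) (xx ^ 3)).mp (by decide)
    have h2 := (ruleS (xx ^ 3) (xx ^ 3)).mp (Or.inl rfl)
    rw [hAx2] at h1; rw [hAx3] at h2
    exact (by decide : ∀ z : G8, (z = xx ^ 2 ∨ z = xx * xx ^ 2 ∨ z = yy * xx ^ 2) →
      (z = xx ^ 3 ∨ z = xx * xx ^ 3 ∨ z = yy * xx ^ 3) → z = xx ^ 3) _ h1 h2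
  have hBx2y : B (xx ^ 2 * yy) = xx ^ 2 * yy := by
    have := shift1 1
    rwa [hB1, mul_one] at this
  have hBy : B yy = yy := by
    have := shift1 (xx ^ 2)
    rwa [hBx2, (by decide : xx ^ 2 * yy * xx ^ 2 = yy)] at this
  have hBxy : B (xx * yy) = xx * yy := by
    have := shift1 xx
    rwa [hBx, (by decide : xx ^ 2 * yy * xx = xx * yy)] at this
  have hBx3y : B (xx ^ 3 * yy) = xx ^ 3 * yy := by
    have := shift1 (xx ^ 3)
    rwa [hBx3, (by decide : xx ^ 2 * yy * xx ^ 3 = xx ^ 3 * yy)] at this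
  -- A on the other coset
  have hAy : A yy = yy := by
    have h1 := (ruleT xx yy).mp (Or.inl (by decide))
    have h2 := (ruleT (xx ^ 2 * yy) yy).mp (Or.inr (by decide))
    rw [hBx] at h1; rw [hBx2y] at h2
    exact (by decide : ∀ z : G8, (z = xx * yy * xx ∨ z = xx ^ 2 * xx) →
      (z = xx * yy * (xx ^ 2 * yy) ∨ z = xx ^ 2 * (xx ^ 2 * yy)) → z = yy) _ h1 h2
  have hAx3y : A (xx ^ 3 * yy) = xx ^ 3 * yy := by
    have := shift0 yy; rwa [hAy] at this
  have hAx2y : A (xx ^ 2 * yy) = xx ^ 2 * yy := by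
    have := shift0 (xx ^ 3 * yy)
    rwa [hAx3y, (by decide : xx ^ 3 * (xx ^ 3 * yy) = xx ^ 2 * yy)] at this
  have hAxy : A (xx * yy) = xx * yy := by
    have := shift0 (xx ^ 2 * yy)
    rwa [hAx2y, (by decide : xx ^ 3 * (xx ^ 2 * yy) = xx * yy)] at this
  have hcases : ∀ g : G8, g = 1 ∨ g = xx ∨ g = xx ^ 2 ∨ g = xx ^ 3 ∨ g = yy ∨
      g = xx * yy ∨ g = xx ^ 2 * yy ∨ g = xx ^ 3 * yy := by decide
  have hAall : ∀ g, A g = g := by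
    intro g
    rcases hcases g with rfl | rfl | rfl | rfl | rfl | rfl | rfl | rfl
    exacts [hA1, hAx, hAx2, hAx3, hAy, hAxy, hAx2y, hAx3y]
  have hBall : ∀ g, B g = g := by
    intro g
    rcases hcases g with rfl | rfl | rfl | rfl | rfl | rfl | rfl | rfl
    exacts [hB1, hBx, hBx2, hBx3, hBy, hBxy, hBx2y, hBx3y]
  apply Equiv.ext
  rintro ⟨g, i⟩
  have hi : i = 0 ∨ i = 1 := (by decide : ∀ j : Fin 2, j = 0 ∨ j = 1) i
  rcases hi with rfl | rfl
  · rw [Equiv.Perm.one_apply, hA, hAall]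
  · rw [Equiv.Perm.one_apply, hB, hBall]

/-- right translations -/
def tr (g : G8) : Equiv.Perm V8 := (Equiv.mulRight g).prodCongr (Equiv.refl (Fin 2))

@[simp] lemma tr_apply (g : G8) (p : V8) : tr g p = (p.1 * g, p.2) := rfl

lemma tr_mem (g : G8) : tr g ∈ autSubgroup (cay2Arc SS TT) := by
  intro u v
  simp only [cay2Arc, tr_apply]
  constructor
  · rintro (⟨h1, h2, s, hs, he⟩ | ⟨h1, h2, s, hs, he⟩)
    · exact Or.inl ⟨h1, h2, s, hs, by rw [he, mul_assoc]⟩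
    · exact Or.inr ⟨h1, h2, s, hs, by rw [he, mul_assoc]⟩
  · rintro (⟨h1, h2, s, hs, he⟩ | ⟨h1, h2, s, hs, he⟩)
    · exact Or.inl ⟨h1, h2, s, hs, by rw [← mul_assoc] at he; exact mul_right_cancel he⟩
    · exact Or.inr ⟨h1, h2, s, hs, by rw [← mul_assoc] at he; exact mul_right_cancel he⟩

lemma tr_mul (g₁ g₂ : G8) : tr g₁ * tr g₂ = tr (g₂ * g₁) :=
  Equiv.ext fun p => by simp [mul_assoc]

lemma tr_one : tr (1 : G8) = 1 :=
  Equiv.ext fun p => by simp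

lemma tr_inv (g : G8) : (tr g)⁻¹ = tr g⁻¹ :=
  inv_eq_of_mul_eq_one_right (by rw [tr_mul]; simp [tr_one])

lemma surj : ∀ σ ∈ autSubgroup (cay2Arc SS TT), ∃ g : G8, σ = tr g := by
  intro σ hσ
  have hσ' : ∀ u v, ArcD u v ↔ ArcD (σ u) (σ v) := fun u v =>
    ((arc_iff u v).symm.trans (hσ u v)).trans (arc_iff _ _)
  have hq2 : (σ (1, 0)).2 = 0 := parts σ hσ' (1, 0)
  set g₀ : G8 := (σ (1, 0)).1 with hg₀
  have hq : σ (1, 0) = (g₀, 0) := Prod.ext rfl hq2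
  have hmem : tr g₀⁻¹ * σ ∈ autSubgroup (cay2Arc SS TT) := mul_mem (tr_mem _) hσ
  have hmem' : ∀ u v, ArcD u v ↔ ArcD ((tr g₀⁻¹ * σ) u) ((tr g₀⁻¹ * σ) v) := fun u v =>
    ((arc_iff u v).symm.trans (hmem u v)).trans (arc_iff _ _)
  have hfix : (tr g₀⁻¹ * σ) (1, 0) = (1, 0) := by
    rw [Equiv.Perm.mul_apply, hq, tr_apply]
    simp
  have h1 : tr g₀⁻¹ * σ = 1 := stab _ hmem' hfix
  refine ⟨g₀, ?_⟩
  have := congrArg (fun τ => (tr g₀⁻¹)⁻¹ * τ) h1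
  simp only [← mul_assoc, inv_mul_cancel, one_mul, mul_one] at this
  rw [this, tr_inv, inv_inv]

def φ : G8 →* autSubgroup (cay2Arc SS TT) where
  toFun g := ⟨tr g⁻¹, tr_mem g⁻¹⟩
  map_one' := Subtype.ext (Equiv.ext fun p => by simp)
  map_mul' g₁ g₂ := Subtype.ext (Equiv.ext fun p => by
    simp [mul_inv_rev, mul_assoc])

lemma φ_bij : Function.Bijective φ := by
  constructor
  · rw [injective_iff_map_eq_one]
    intro g hg
    have := congrArg (fun s => ((s : autSubgroup (cay2Arc SS TT)) : Equiv.Perm V8) (1, 0)) hg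
    simp only [φ] at this
    have h2 : ((1 : G8) * g⁻¹, (0 : Fin 2)) = ((1 : G8), (0 : Fin 2)) := this
    have h3 : (1 : G8) * g⁻¹ = 1 := congrArg Prod.fst h2
    rw [one_mul, inv_eq_one] at h3
    exact h3
  · rintro ⟨σ, hσ⟩
    obtain ⟨g, rfl⟩ := surj σ hσ
    exact ⟨g⁻¹, Subtype.ext (by simp only [φ, MonoidHom.coe_mk, OneHom.coe_mk, inv_inv])⟩

end Stmt13Aux

open Stmt13Aux

/-- The 2-Cayley digraph of `Q₈` with `T₁₂ = {1, x, y}`, `T₂₁ = {xy, x²}`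
is an oriented graph and a 2-POSR of `Q₈`. -/
theorem stmt_13 :
    let x : QuaternionGroup 2 := QuaternionGroup.a 1
    let y : QuaternionGroup 2 := QuaternionGroup.xa 0
    let S : Set (QuaternionGroup 2) := {1, x, y}
    let T : Set (QuaternionGroup 2) := {x * y, x ^ 2}
    let Arc := cay2Arc S T
    S ∩ T⁻¹ = ∅ ∧
      Nonempty (autSubgroup Arc ≃* QuaternionGroup 2) ∧
      (∀ σ ∈ autSubgroup Arc, (∃ p, σ p = p) → σ = 1) ∧
      (∀ σ ∈ autSubgroup Arc, ∀ p : QuaternionGroup 2 × Fin 2, (σ p).2 = p.2) ∧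
      (∀ (g h : QuaternionGroup 2) (i : Fin 2),
        ∃ σ ∈ autSubgroup Arc, σ (g, i) = (h, i)) := by
  show SS ∩ TT⁻¹ = ∅ ∧
      Nonempty (autSubgroup (cay2Arc SS TT) ≃* G8) ∧
      (∀ σ ∈ autSubgroup (cay2Arc SS TT), (∃ p, σ p = p) → σ = 1) ∧
      (∀ σ ∈ autSubgroup (cay2Arc SS TT), ∀ p : V8, (σ p).2 = p.2) ∧
      (∀ (g h : G8) (i : Fin 2), ∃ σ ∈ autSubgroup (cay2Arc SS TT), σ (g, i) = (h, i))
  refine ⟨?_, ?_, ?_, ?_, ?_⟩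
  · rw [Set.eq_empty_iff_forall_notMem]
    rintro z ⟨hz1, hz2⟩
    rw [Set.mem_inv] at hz2
    simp only [SS, TT, Set.mem_insert_iff, Set.mem_singleton_iff] at hz1 hz2
    exact (by decide : ∀ z : G8, (z = 1 ∨ z = xx ∨ z = yy) →
      ¬(z⁻¹ = xx * yy ∨ z⁻¹ = xx ^ 2)) z hz1 hz2
  · exact ⟨(MulEquiv.ofBijective φ φ_bij).symm⟩
  · rintro σ hσ ⟨p, hp⟩
    obtain ⟨g, rfl⟩ := surj σ hσ
    have h1 : p.1 * g = p.1 := congrArg Prod.fst hp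
    have h2 : g = 1 := by
      have := h1.trans (mul_one p.1).symm
      exact mul_left_cancel this
    rw [h2, tr_one]
  · intro σ hσ p
    exact parts σ (fun u v => ((arc_iff u v).symm.trans (hσ u v)).trans (arc_iff _ _)) p
  · intro g h i
    exact ⟨tr (g⁻¹ * h), tr_mem _, by rw [tr_apply, mul_inv_cancel_left]⟩
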